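/- Let λ = Δ_{n1,…,nk}, let P_i be the peak of the i-th component Δ_{n_i}, and for nonnegative integers t1,…,tk with t1 = tk = 0 let L'(λ;t1,…,tk) be the set of lattice paths μ ∈ L(λ;0,0) such that for each i the intersection of μ with the line of slope −1 through P_i is P_i+(−t_i,t_i). Then Σ_{μ ∈ L'(λ;t1,…,tk)} q^{|λ/μ|} = Π_{i=1}^{k−1} q^{n_i t_i + n_{i+1} t_{i+1} + (t_i − t_{i+1})²/2} · [n_i+n_{i+1} choose n_i+t_i−t_{i+1}]_q. -/

import Mathlib

open scoped BigOperators

namespace DyckTilings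

/-- In the step word of a lattice path, `false` is a down step `(1,0)` and
`true` is an up step `(0,1)`.  `pathX w x0 c` is the x-coordinate of the point
of the path (started at a point with x-coordinate `x0` on the diagonal
`x + y = 0`) lying on the diagonal `x + y = c`, i.e. the point reached after
`c` steps. -/
def pathX (w : List Bool) (x0 : ℤ) (c : ℤ) : ℤ :=
  x0 + ((w.take c.toNat).count false : ℤ)

/-- `w` is (the step word of) a Dyck path of length `2 * n`: a lattice path
from `(0,0)` to `(n,n)` never going below the line `y = x`. -/
def IsDyckWord (n : ℕ) (w : List Bool) : Prop :=
  w.length = 2 * n ∧ w.count false = n ∧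
    ∀ c : ℤ, 0 ≤ c → c ≤ 2 * n → 2 * pathX w 0 c ≤ c

/-- the Dyck path `Δ_k`: `k` up steps followed by `k` down steps -/
def delta (k : ℕ) : List Bool :=
  List.replicate k true ++ List.replicate k false

/-- `Δ_{N 0, N 1, …, N (k-1)} = Δ_{N 0} * ⋯ * Δ_{N (k-1)}` (concatenation of
Dyck paths is concatenation of their step words) -/
def deltaComp (N : ℕ → ℕ) (k : ℕ) : List Bool :=
  ((List.range k).map fun i => delta (N i)).flatten

/-- the q-integer `[m]_q = 1 + q + ⋯ + q^(m-1)` -/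
def qint {K : Type*} [CommRing K] (q : K) (m : ℕ) : K :=
  ∑ i ∈ Finset.range m, q ^ i

/-- the q-factorial `[m]_q! = [1]_q [2]_q ⋯ [m]_q` -/
def qfact {K : Type*} [CommRing K] (q : K) (m : ℕ) : K :=
  ∏ i ∈ Finset.range m, qint q (i + 1)

/-- the q-binomial coefficient `[m choose j]_q`, equal to `0` when `j < 0` or
`j > m` -/
noncomputable def qbinom {K : Type*} [Field K] (q : K) (m : ℕ) (j : ℤ) : K :=
  if 0 ≤ j ∧ j ≤ m then qfact q m / (qfact q j.toNat * qfact q (m - j.toNat)) else 0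

/-- the height (value of `y - x`) of the point of the path `w` (started on the
main diagonal) lying on the diagonal `x + y = c` -/
def heightAt (w : List Bool) (c : ℕ) : ℤ :=
  (c : ℤ) - 2 * pathX w 0 (c : ℤ)

/-- the indices of the up steps of `w`; each chord of `w` consists of an up
step and its matching down step, so chords are indexed by `upSteps w` -/
def upSteps (w : List Bool) : Finset ℕ :=
  (Finset.range w.length).filter fun i => w.getD i false = true

/-- the index of the down step matched with the up step at index `i` -/
noncomputable def matchIdx (w : List Bool) (i : ℕ) : ℕ :=
  sInf {j : ℕ | i < j ∧ heightAt w (j + 1) = heightAt w i}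

/-- the length `|c|` of the chord of the up step at index `i`: the difference
of the x-coordinates of the starting point of the up step and the ending point
of the matching down step -/
noncomputable def chordLen (w : List Bool) (i : ℕ) : ℕ :=
  (pathX w 0 ((matchIdx w i : ℤ) + 1) - pathX w 0 (i : ℤ)).toNat

/-- the height `ht(c)` of the chord of the up step at index `i`: the chord lies
between the lines `y = x + ht(c) - 1` and `y = x + ht(c)` -/
def chordHt (w : List Bool) (i : ℕ) : ℕ := (heightAt w (i + 1)).toNat

/-- `ht(μ) = Σ_{c ∈ C(μ)} (ht(c) - 1)` -/
def htSum (w : List Bool) : ℕ := ∑ i ∈ upSteps w, (chordHt w i - 1)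

/-! ### Skew shapes and (full) cover-inclusive Dyck tilings -/

/-- The set of cells of the skew shape `lam/mu`, for Dyck paths `lam` and `mu`
with `mu` weakly above `lam`; the cell `(x,y)` is the unit square
`[x,x+1] × [y,y+1]`, and it belongs to `lam/mu` exactly when, on the diagonal
`x + y + 1` through its center, `mu` passes weakly to its left and `lam`
weakly to its right. -/
def skewCells (lam mu : List Bool) : Set (ℤ × ℤ) :=
  {c | pathX mu 0 (c.1 + c.2 + 1) ≤ c.1 ∧ c.1 + 1 ≤ pathX lam 0 (c.1 + c.2 + 1)}

/-- the number of cells `|λ/μ|` of the skew shape -/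
noncomputable def ncells (lam mu : List Bool) : ℕ := (skewCells lam mu).ncard

/-- the cells of a ribbon starting at the cell `p`, with `true` = north step
and `false` = east step -/
def cellsOf : List Bool → ℤ × ℤ → List (ℤ × ℤ)
  | [], p => [p]
  | s :: rest, p => p :: cellsOf rest (if s then (p.1, p.2 + 1) else (p.1 + 1, p.2))

/-- A Dyck tile: a ribbon whose sequence of cells, read from southwest to
northeast, follows a Dyck word (equivalently, the centers of its cells form a
Dyck path). -/
def IsDyckTile (s : Set (ℤ × ℤ)) : Prop :=
  ∃ (x0 y0 : ℤ) (k : ℕ) (u : List Bool), IsDyckWord k u ∧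
    s = {c | c ∈ cellsOf u (x0, y0)}

/-- southeast translation by `(k, -k)` -/
def shiftSE (k : ℤ) (s : Set (ℤ × ℤ)) : Set (ℤ × ℤ) :=
  (fun c => (c.1 + k, c.2 - k)) '' s

/-- cover-inclusiveness: if a tile `η₁` has a cell to the southeast of a cell
of a tile `η₂`, then that southeast translation of `η₂` is contained in `η₁` -/
def IsCoverInclusive (T : Set (Set (ℤ × ℤ))) : Prop :=
  ∀ η₁ ∈ T, ∀ η₂ ∈ T, ∀ c ∈ η₂, ∀ k : ℤ, 1 ≤ k →
    (c.1 + k, c.2 - k) ∈ η₁ → shiftSE k η₂ ⊆ η₁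

/-- `T` is a cover-inclusive Dyck tiling of the skew shape `lam/mu` (in
particular `mu` lies weakly above `lam`, so that `lam/mu` is defined). -/
def IsDyckTiling (lam mu : List Bool) (T : Set (Set (ℤ × ℤ))) : Prop :=
  (∀ c : ℤ, pathX mu 0 c ≤ pathX lam 0 c) ∧
  (∀ η ∈ T, IsDyckTile η) ∧
  T.PairwiseDisjoint id ∧
  (⋃ η ∈ T, η) = skewCells lam mu ∧
  IsCoverInclusive T

/-- the number of tiles `|T|` of a tiling -/
noncomputable def ntiles (T : Set (Set (ℤ × ℤ))) : ℕ := T.ncard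

/-- the half-length of a Dyck tile (a Dyck tile of length `2k` has `2k+1`
cells) -/
noncomputable def halfLen (s : Set (ℤ × ℤ)) : ℕ := s.ncard / 2

/-- `‖T‖`: the sum of the half-lengths of the tiles of `T` -/
noncomputable def normT (T : Set (Set (ℤ × ℤ))) : ℕ := ∑ᶠ η ∈ T, halfLen η

/-! ### Triangles, regions `λ/μ`, and truncated Dyck tilings

The unit cell `(x,y)` is cut by its diagonal of slope `-1` into a southwest
half-cell, the triangle `(x, y, false)`, and a northeast half-cell, the
triangle `(x, y, true)`. -/

/-- Membership of a triangle in the region `lam/mu`, where `lam` is a Dyck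
path of semilength `n` from `(0,0)` to `(n,n)` and `mu` is a lattice path
starting at `(-a, a)` lying weakly above `lam`; the region is bounded by
`lam`, `mu` and the two segments of slope `-1` joining `(0,0)` to `(-a,a)` and
`(n,n)` to the endpoint of `mu`. -/
def TriInRegion (n : ℕ) (lam mu : List Bool) (a : ℤ) (t : ℤ × ℤ × Bool) : Prop :=
  pathX mu (-a) (t.1 + t.2.1 + 1) ≤ t.1 ∧
  t.1 + 1 ≤ pathX lam 0 (t.1 + t.2.1 + 1) ∧
  (if t.2.2 then 0 ≤ t.1 + t.2.1 + 1 ∧ t.1 + t.2.1 + 2 ≤ 2 * (n : ℤ)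
   else 0 ≤ t.1 + t.2.1 ∧ t.1 + t.2.1 + 1 ≤ 2 * (n : ℤ))

/-- `L(λ; a, b)`: the lattice paths of up and down steps from `(-a, a)` to
`(n-b, n+b)` that never go below `lam` -/
def LSet (n : ℕ) (lam : List Bool) (a b : ℤ) : Set (List Bool) :=
  {w | w.length = 2 * n ∧ (w.count false : ℤ) = (n : ℤ) - b + a ∧
    ∀ c : ℤ, 0 ≤ c → c ≤ 2 * n → pathX w (-a) c ≤ pathX lam 0 c}

/-- twice the area `|λ/μ|` of the region `lam/mu` (i.e. the number of
triangles contained in it) -/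
def area2 (n : ℕ) (lam mu : List Bool) (a : ℤ) : ℤ :=
  ∑ d ∈ Finset.range (2 * n),
    (pathX lam 0 (d : ℤ) - pathX mu (-a) (d : ℤ) +
      (pathX lam 0 ((d : ℤ) + 1) - pathX mu (-a) ((d : ℤ) + 1)))

/-- the last (northeast) cell of a ribbon with start cell `(x0, y0)` and step
word `u` -/
def lastCell (x0 y0 : ℤ) (u : List Bool) : ℤ × ℤ :=
  (x0 + u.count false, y0 + u.count true)

/-- A truncated Dyck tile: a Dyck tile of positive length with the southwest
half-cell of its southwest cell and the northeast half-cell of its northeast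
cell cut off. -/
def IsTruncTile (s : Set (ℤ × ℤ × Bool)) : Prop :=
  ∃ (x0 y0 : ℤ) (k : ℕ) (u : List Bool), 0 < k ∧ IsDyckWord k u ∧
    s = {t : ℤ × ℤ × Bool | (t.1, t.2.1) ∈ cellsOf u (x0, y0)} \
        {(x0, y0, false), ((lastCell x0 y0 u).1, (lastCell x0 y0 u).2, true)}

/-- southeast translation of a set of triangles by `(1, -1)` -/
def shiftTriSE (s : Set (ℤ × ℤ × Bool)) : Set (ℤ × ℤ × Bool) :=
  (fun t => (t.1 + 1, t.2.1 - 1, t.2.2)) '' s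

/-- `T` is a cover-inclusive truncated Dyck tiling of (a subregion of) the
region `lam/mu`: the tiles are disjoint truncated Dyck tiles inside the
region, every tile whose southeast translate by `(1,-1)` meets the region has
this translate contained in a tile of `T`, and no two tiles share a border of
slope `-1`. -/
def IsTruncTiling (n : ℕ) (lam mu : List Bool) (a : ℤ)
    (T : Set (Set (ℤ × ℤ × Bool))) : Prop :=
  (∀ η ∈ T, IsTruncTile η) ∧
  T.PairwiseDisjoint id ∧
  (∀ η ∈ T, ∀ t ∈ η, TriInRegion n lam mu a t) ∧
  (∀ η ∈ T, (∃ t ∈ shiftTriSE η, TriInRegion n lam mu a t) →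
      ∃ η' ∈ T, shiftTriSE η ⊆ η') ∧
  (∀ η₁ ∈ T, ∀ η₂ ∈ T, η₁ ≠ η₂ →
      ∀ x y : ℤ, ¬((x, y, false) ∈ η₁ ∧ (x, y, true) ∈ η₂))

/-- the half-length of a truncated Dyck tile (a truncated Dyck tile of
half-length `k` consists of `4k` triangles) -/
noncomputable def halfLenT (s : Set (ℤ × ℤ × Bool)) : ℕ := s.ncard / 4

/-- `‖T‖` for truncated tilings: the sum of the half-lengths of the tiles -/
noncomputable def normTT (T : Set (Set (ℤ × ℤ × Bool))) : ℕ := ∑ᶠ η ∈ T, halfLenT η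

/-- `B_q(λ; a, b) = Σ_{μ ∈ L(λ;a,b)} Σ_{T ∈ TD(λ/μ)} q^{|λ/μ| - ‖T‖}`, a
polynomial in `q^{1/2}`, expressed in the variable `v = q^{1/2}` (so `q = v²`
and `q^{|λ/μ| - ‖T‖} = v^{2|λ/μ| - 2‖T‖}`). -/
noncomputable def B (v : RatFunc ℚ) (n : ℕ) (lam : List Bool) (a b : ℤ) : RatFunc ℚ :=
  ∑ᶠ mu ∈ LSet n lam a b, ∑ᶠ T ∈ {T | IsTruncTiling n lam mu a T},
    v ^ (area2 n lam mu a - 2 * (normTT T : ℤ))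

/-! ### Hermite histories and matchings -/

/-- A Hermite history on the Dyck path `mu` of length `2n`: a labeling of the
down steps of `mu` such that a down step of height `h` gets a label in
`{0, 1, …, h-1}` (encoded as a function on `ℕ` vanishing off the down steps). -/
def HHSet (n : ℕ) (mu : List Bool) : Set (ℕ → ℕ) :=
  {σ | (∀ j, j < 2 * n → mu.getD j true = false → σ j < (heightAt mu j).toNat) ∧
       ∀ j, ¬(j < 2 * n ∧ mu.getD j true = false) → σ j = 0}

/-- `‖H‖`: the sum of the labels of a Hermite history -/
def normH (n : ℕ) (σ : ℕ → ℕ) : ℕ := ∑ j ∈ Finset.range (2 * n), σ j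

/-- a complete matching on `{0, 1, …, 2n-1}` -/
def IsMatching (n : ℕ) (π : Set (ℕ × ℕ)) : Prop :=
  (∀ p ∈ π, p.1 < p.2 ∧ p.2 < 2 * n) ∧
  ∀ m, m < 2 * n → ∃! p, p ∈ π ∧ (p.1 = m ∨ p.2 = m)

/-- `M(μ)`: the complete matchings whose shape is the Dyck path `mu` (the
`i`-th step of `mu` is an up step iff `i` is the smaller element of its pair) -/
def MSet (n : ℕ) (mu : List Bool) : Set (Set (ℕ × ℕ)) :=
  {π | IsMatching n π ∧ ∀ i, i < 2 * n → (mu.getD i false = true ↔ ∃ p ∈ π, p.1 = i)}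

/-- the number of crossings of a matching -/
noncomputable def cro (π : Set (ℕ × ℕ)) : ℕ :=
  {pq : (ℕ × ℕ) × (ℕ × ℕ) | pq.1 ∈ π ∧ pq.2 ∈ π ∧
    pq.1.1 < pq.2.1 ∧ pq.2.1 < pq.1.2 ∧ pq.1.2 < pq.2.2}.ncard

/-- the number of nestings of a matching -/
noncomputable def nest (π : Set (ℕ × ℕ)) : ℕ :=
  {pq : (ℕ × ℕ) × (ℕ × ℕ) | pq.1 ∈ π ∧ pq.2 ∈ π ∧
    pq.1.1 < pq.2.1 ∧ pq.2.2 < pq.1.2}.ncard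

/-- `D(*/μ)`: cover-inclusive Dyck tilings of `λ/μ` over all Dyck paths `λ`
of length `2n` (for fixed `mu`, a tiling determines `lam`) -/
def DstarSet (n : ℕ) (mu : List Bool) : Set (Set (Set (ℤ × ℤ))) :=
  {T | ∃ lam, IsDyckWord n lam ∧ IsDyckTiling lam mu T}

/-- `D(2n)`: the disjoint union of the sets `D(ν/ρ)` over all pairs of Dyck
paths `ν, ρ` of length `2n`, realized as the set of triples `(ν, ρ, T)` -/
def DDSet (n : ℕ) : Set (List Bool × List Bool × Set (Set (ℤ × ℤ))) :=
  {x | IsDyckWord n x.1 ∧ IsDyckWord n x.2.1 ∧ IsDyckTiling x.1 x.2.1 x.2.2}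

/-! auxiliary -/

def listsF : ℕ → Finset (List Bool)
  | 0 => {[]}
  | m+1 => ((listsF m).image (List.cons true)) ∪ ((listsF m).image (List.cons false))

lemma mem_listsF : ∀ {m : ℕ} {l : List Bool}, l ∈ listsF m ↔ l.length = m
  | 0, l => by
      constructor
      · intro h; simp only [listsF, Finset.mem_singleton] at h; simp [h]
      · intro h; simp only [listsF, Finset.mem_singleton]
        exact List.length_eq_zero_iff.mp h
  | m+1, l => by
      constructor
      · intro h
        simp only [listsF, Finset.mem_union, Finset.mem_image] at h
        rcases h with ⟨v, hv, rfl⟩ | ⟨v, hv, rfl⟩ <;>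
          simp [mem_listsF.mp hv]
      · intro h
        cases l with
        | nil => simp at h
        | cons b tl =>
          have htl : tl ∈ listsF m := mem_listsF.mpr (by simpa using h)
          simp only [listsF, Finset.mem_union, Finset.mem_image]
          cases b
          · exact Or.inr ⟨tl, htl, rfl⟩
          · exact Or.inl ⟨tl, htl, rfl⟩

def coinvF : List Bool → ℕ
  | [] => 0
  | b :: v => (if b then v.count false else 0) + coinvF v

def gnatF (u : List Bool) : ℕ := ∑ s ∈ Finset.range u.length, (u.take s).count false

lemma gnatF_cons (b : Bool) (u : List Bool) :
    gnatF (b :: u) = (if b then 0 else u.length) + gnatF u := by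
  unfold gnatF
  rw [List.length_cons, Finset.sum_range_succ']
  simp only [List.take_succ_cons, List.count_cons, List.take_zero, List.count_nil, add_zero]
  rw [Finset.sum_add_distrib, Finset.sum_const, Finset.card_range]
  cases b <;> simp [add_comm]

lemma gnat_coinv_id : ∀ (u : List Bool),
    2*(gnatF u : ℤ) + 2*(coinvF u : ℤ) + (u.count false : ℤ) + (u.count false : ℤ)^2
      = 2 * (u.count false : ℤ) * u.length
  | [] => by simp [gnatF, coinvF]
  | b :: u => by
      have ih := gnat_coinv_id u
      rw [gnatF_cons]
      cases b <;>
      · simp [coinvF, List.count_cons, List.length_cons]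
        push_cast
        push_cast at ih
        linear_combination ih

lemma qint_split {K : Type*} [CommRing K] (q : K) (a b : ℕ) :
    qint q (a + b) = qint q a + q ^ a * qint q b := by
  unfold qint
  rw [Finset.sum_range_add, Finset.mul_sum]
  simp [pow_add]

lemma qfact_succ {K : Type*} [CommRing K] (q : K) (m : ℕ) :
    qfact q (m+1) = qfact q m * qint q (m+1) :=
  Finset.prod_range_succ _ m

lemma qint_X2_ne_zero (m : ℕ) (hm : 0 < m) :
    qint ((RatFunc.X : RatFunc ℚ)^2) m ≠ 0 := by
  have hmap : qint ((RatFunc.X : RatFunc ℚ)^2) m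
      = algebraMap (Polynomial ℚ) (RatFunc ℚ)
          (∑ i ∈ Finset.range m, ((Polynomial.X : Polynomial ℚ)^2)^i) := by
    rw [map_sum]
    unfold qint
    refine Finset.sum_congr rfl fun i _ => ?_
    rw [map_pow, map_pow, RatFunc.algebraMap_X]
  rw [hmap]
  intro h
  have h2 : (∑ i ∈ Finset.range m, ((Polynomial.X : Polynomial ℚ)^2)^i) = 0 :=
    RatFunc.algebraMap_injective ℚ (by simpa using h)
  obtain ⟨m, rfl⟩ : ∃ m', m = m' + 1 := ⟨m - 1, by omega⟩
  have := congrArg (Polynomial.eval 0) h2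
  simp [Polynomial.eval_finset_sum, Finset.sum_range_succ', pow_succ] at this

lemma qfact_X2_ne_zero (m : ℕ) : qfact ((RatFunc.X : RatFunc ℚ)^2) m ≠ 0 := by
  unfold qfact
  exact Finset.prod_ne_zero_iff.mpr fun i _ => qint_X2_ne_zero _ (Nat.succ_pos i)

def WSF (m dd : ℕ) : Finset (List Bool) := (listsF m).filter fun u => u.count false = dd

lemma WSF_empty {m dd : ℕ} (h : m < dd) : WSF m dd = ∅ := by
  ext u
  simp only [WSF, Finset.mem_filter, mem_listsF, Finset.notMem_empty, iff_false, not_and]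
  intro hlen hcnt
  have := u.count_le_length (a := false)
  omega

lemma sum_WSF_succ (m dd : ℕ) (f : List Bool → RatFunc ℚ) :
    ∑ u ∈ WSF (m+1) dd, f u
      = (∑ v ∈ WSF m dd, f (true :: v))
        + ∑ v ∈ (listsF m).filter (fun v => v.count false + 1 = dd), f (false :: v) := by
  have hL : listsF (m+1) = ((listsF m).image (List.cons true)) ∪ ((listsF m).image (List.cons false)) := rfl
  have hdisj : Disjoint (((listsF m).image (List.cons true)).filter (fun u => u.count false = dd))
      (((listsF m).image (List.cons false)).filter (fun u => u.count false = dd)) := by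
    rw [Finset.disjoint_left]
    rintro x hx hx'
    simp only [Finset.mem_filter, Finset.mem_image] at hx hx'
    obtain ⟨⟨v, _, rfl⟩, _⟩ := hx
    obtain ⟨⟨v', _, h⟩, _⟩ := hx'
    cases h
  unfold WSF
  rw [hL, Finset.filter_union, Finset.sum_union hdisj, Finset.filter_image, Finset.filter_image,
    Finset.sum_image (fun _ _ _ _ h => by injection h),
    Finset.sum_image (fun _ _ _ _ h => by injection h)]
  congr 1
  all_goals
    apply Finset.sum_congr ?_ (fun _ _ => rfl)
    apply Finset.filter_congr
    intro u _
    simp [List.count_cons]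

lemma sum_coinv_WSF_zero (q : RatFunc ℚ) : ∀ (m : ℕ), ∑ u ∈ WSF m 0, q ^ coinvF u = 1
  | 0 => by
      have : WSF 0 0 = {[]} := by
        ext u; simp [WSF, mem_listsF, List.length_eq_zero_iff, listsF]
        rintro rfl; simp
      rw [this]; simp [coinvF]
  | m+1 => by
      rw [sum_WSF_succ]
      have h2 : (listsF m).filter (fun v => v.count false + 1 = 0) = ∅ := by
        ext u; simp
      rw [h2, Finset.sum_empty, add_zero]
      rw [Finset.sum_congr rfl (fun v hv => ?_), sum_coinv_WSF_zero q m]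
      simp only [WSF, Finset.mem_filter] at hv
      simp [coinvF, hv.2]

lemma sum_coinv_mul (q : RatFunc ℚ) : ∀ (m : ℕ), ∀ dd ≤ m,
    (∑ u ∈ WSF m dd, q ^ coinvF u) * (qfact q dd * qfact q (m - dd)) = qfact q m
  | 0 => by
      intro dd hdd
      interval_cases dd
      simp [sum_coinv_WSF_zero, qfact]
  | m+1 => by
      intro dd hdd
      match dd with
      | 0 => simp [sum_coinv_WSF_zero, qfact]
      | e+1 =>
        rw [sum_WSF_succ]
        have hfil : (listsF m).filter (fun v => v.count false + 1 = e+1) = WSF m e := by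
          unfold WSF; apply Finset.filter_congr; intro u _; simp
        rw [hfil]
        have hco1 : ∀ v ∈ WSF m (e+1), q ^ coinvF (true :: v) = q^(e+1) * q ^ coinvF v := by
          intro v hv
          simp only [WSF, Finset.mem_filter] at hv
          simp [coinvF, hv.2, pow_add]
        have hco2 : ∀ v ∈ WSF m e, q ^ coinvF (false :: v) = q ^ coinvF v := by
          intro v _; simp [coinvF]
        rw [Finset.sum_congr rfl hco1, Finset.sum_congr rfl hco2, ← Finset.mul_sum]
        have hsub : m + 1 - (e+1) = m - e := by omega
        rw [hsub]
        rcases Nat.lt_or_ge e m with hem | hem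
        · have ih1 := sum_coinv_mul q m (e+1) (by omega)
          have ih2 := sum_coinv_mul q m e (by omega)
          have hR1 : qfact q (m-e) = qfact q (m-(e+1)) * qint q (m-e) := by
            have h' : m - e = (m - (e+1)) + 1 := by omega
            rw [h', qfact_succ]
          have hR2 : qfact q (e+1) = qfact q e * qint q (e+1) := qfact_succ q e
          have hR3 : qfact q (m+1) = qfact q m * qint q (m+1) := qfact_succ q m
          have hR4 : qint q (m+1) = qint q (e+1) + q^(e+1) * qint q (m-e) := by
            rw [← qint_split]
            congr 1
            omega
          rw [hR1] at ih2
          rw [hR2] at ih1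
          rw [hR1, hR2, hR3, hR4]
          linear_combination (q^(e+1) * qint q (m-e)) * ih1 + qint q (e+1) * ih2
        · have he : e = m := by omega
          subst he
          rw [WSF_empty (by omega), Finset.sum_empty, mul_zero, zero_add]
          have ih2 := sum_coinv_mul q e e le_rfl
          rw [Nat.sub_self] at ih2 ⊢
          rw [qfact_succ q e]
          linear_combination qint q (e+1) * ih2

lemma qsum (m dd : ℕ) (h : dd ≤ m) :
    ∑ u ∈ WSF m dd, ((RatFunc.X : RatFunc ℚ)^2) ^ coinvF u
      = qbinom ((RatFunc.X : RatFunc ℚ)^2) m (dd : ℤ) := by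
  unfold qbinom
  rw [if_pos ⟨Int.natCast_nonneg dd, by exact_mod_cast h⟩, Int.toNat_natCast]
  rw [eq_div_iff (mul_ne_zero (qfact_X2_ne_zero _) (qfact_X2_ne_zero _))]
  exact sum_coinv_mul _ m dd h

/-! segment sums -/

def fsegF (a t0 : ℕ) (u : List Bool) (s : ℕ) : ℤ :=
  (min s a : ℤ) + (t0 : ℤ) - ((u.take s).count false : ℤ)

def CsegF (a b t0 : ℕ) (u : List Bool) : ℤ :=
  ∑ s ∈ Finset.range (a+b), (fsegF a t0 u s + fsegF a t0 u (s+1))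

lemma sum_id_int (a : ℕ) : 2 * ∑ s ∈ Finset.range a, (s : ℤ) = a^2 - a := by
  induction a with
  | zero => simp
  | succ a ih =>
    rw [Finset.sum_range_succ]
    push_cast
    linear_combination ih

lemma sum_min_int : ∀ (a b : ℕ), 2 * ∑ s ∈ Finset.range (a+b), (min s a : ℤ) = a^2 - a + 2*a*b
  | a, 0 => by
      have h1 : ∀ s ∈ Finset.range a, min (s : ℤ) (a : ℤ) = (s : ℤ) := by
        intro s hs
        rw [Finset.mem_range] at hs
        exact min_eq_left (by exact_mod_cast hs.le)
      rw [Nat.add_zero, Finset.sum_congr rfl h1, sum_id_int]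
      push_cast
      ring
  | a, b+1 => by
      have ih := sum_min_int a b
      rw [show a + (b+1) = (a+b)+1 from rfl, Finset.sum_range_succ,
        min_eq_right (by exact_mod_cast Nat.le_add_right a b : ((a:ℕ):ℤ) ≤ ((a+b : ℕ):ℤ))]
      push_cast
      push_cast at ih
      linear_combination ih

lemma Cseg_eq (a b t0 t1 : ℕ) (u : List Bool) (hl : u.length = a + b)
    (hc : (u.count false : ℤ) = (a:ℤ) + (t0:ℤ) - (t1:ℤ)) :
    CsegF a b t0 u
      = (2*((a:ℤ)*(t0:ℤ) + (b:ℤ)*(t1:ℤ)) + ((t0:ℤ) - (t1:ℤ))^2) + 2 * (coinvF u : ℤ) := by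
  have key := gnat_coinv_id u
  rw [hl] at key
  have hmin := sum_min_int a b
  unfold CsegF
  rw [Finset.sum_add_distrib]
  have h2 : ∑ s ∈ Finset.range (a+b), fsegF a t0 u (s+1)
      = ∑ s ∈ Finset.range (a+b), fsegF a t0 u s + fsegF a t0 u (a+b) - fsegF a t0 u 0 := by
    have e1 := Finset.sum_range_succ' (fsegF a t0 u) (a+b)
    have e2 := Finset.sum_range_succ (fsegF a t0 u) (a+b)
    rw [e2] at e1
    linarith
  rw [h2]
  have h4 : ∑ s ∈ Finset.range (a+b), fsegF a t0 u s
      = (∑ s ∈ Finset.range (a+b), (min s a : ℤ)) + (a+b) * (t0:ℤ) - (gnatF u : ℤ) := by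
    unfold fsegF
    rw [Finset.sum_sub_distrib, Finset.sum_add_distrib, Finset.sum_const, Finset.card_range]
    have : (gnatF u : ℤ) = ∑ s ∈ Finset.range (a+b), ((u.take s).count false : ℤ) := by
      unfold gnatF
      rw [hl]
      push_cast
      rfl
    rw [this]
    push_cast
    ring
  have h5 : fsegF a t0 u (a+b) = (a:ℤ) + (t0:ℤ) - (u.count false : ℤ) := by
    unfold fsegF
    rw [List.take_of_length_le (le_of_eq hl),
      min_eq_right (by exact_mod_cast Nat.le_add_right a b : ((a:ℕ):ℤ) ≤ ((a+b : ℕ):ℤ))]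
  have h6 : fsegF a t0 u 0 = (t0:ℤ) := by simp [fsegF]
  rw [h4, h5, h6, hc]
  rw [hc] at key
  push_cast
  push_cast at key hmin
  linear_combination hmin - key

def WSegF (a b t0 t1 : ℕ) : Finset (List Bool) :=
  (listsF (a+b)).filter fun u => (u.count false : ℤ) = (a:ℤ) + (t0:ℤ) - (t1:ℤ)

lemma segsum (a b t0 t1 : ℕ) :
    ∑ u ∈ WSegF a b t0 t1, (RatFunc.X : RatFunc ℚ) ^ CsegF a b t0 u
      = (RatFunc.X : RatFunc ℚ) ^ (2*((a:ℤ)*(t0:ℤ) + (b:ℤ)*(t1:ℤ)) + ((t0:ℤ) - (t1:ℤ))^2)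
        * qbinom ((RatFunc.X : RatFunc ℚ)^2) (a+b) ((a:ℤ) + (t0:ℤ) - (t1:ℤ)) := by
  rcases lt_or_ge ((a:ℤ) + (t0:ℤ) - (t1:ℤ)) 0 with hneg | hpos
  · have hW : WSegF a b t0 t1 = ∅ := by
      ext u
      simp only [WSegF, Finset.mem_filter, Finset.notMem_empty, iff_false, not_and]
      intro _
      intro hcc
      have := Int.natCast_nonneg (u.count false)
      omega
    have hq : qbinom ((RatFunc.X : RatFunc ℚ)^2) (a+b) ((a:ℤ) + (t0:ℤ) - (t1:ℤ)) = 0 := by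
      unfold qbinom
      rw [if_neg (by omega)]
    rw [hW, hq, Finset.sum_empty, mul_zero]
  · obtain ⟨dd, hdd⟩ : ∃ dd : ℕ, ((a:ℤ) + (t0:ℤ) - (t1:ℤ)) = (dd:ℤ) :=
      ⟨_, (Int.toNat_of_nonneg hpos).symm⟩
    rcases le_or_gt dd (a+b) with hle | hgt
    · have hW : WSegF a b t0 t1 = WSF (a+b) dd := by
        unfold WSegF WSF
        apply Finset.filter_congr
        intro u _
        rw [hdd]
        exact ⟨fun h => by exact_mod_cast h, fun h => by exact_mod_cast h⟩
      rw [hW]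
      have hterm : ∀ u ∈ WSF (a+b) dd,
          (RatFunc.X : RatFunc ℚ) ^ CsegF a b t0 u
            = (RatFunc.X : RatFunc ℚ) ^ (2*((a:ℤ)*(t0:ℤ) + (b:ℤ)*(t1:ℤ)) + ((t0:ℤ) - (t1:ℤ))^2)
              * ((RatFunc.X : RatFunc ℚ)^2) ^ coinvF u := by
        intro u hu
        simp only [WSF, Finset.mem_filter, mem_listsF] at hu
        rw [Cseg_eq a b t0 t1 u hu.1 (by rw [hu.2, ← hdd])]
        rw [zpow_add₀ RatFunc.X_ne_zero]
        congr 1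
        rw [show (2 * (coinvF u : ℤ)) = ((2 * coinvF u : ℕ) : ℤ) by push_cast; ring,
          zpow_natCast, pow_mul]
      rw [Finset.sum_congr rfl hterm, ← Finset.mul_sum, qsum (a+b) dd hle, hdd]
    · have hW : WSegF a b t0 t1 = ∅ := by
        ext u
        simp only [WSegF, Finset.mem_filter, Finset.notMem_empty, iff_false, not_and]
        intro hlen hcc
        rw [mem_listsF] at hlen
        have := u.count_le_length (a := false)
        rw [hdd] at hcc
        have : u.count false = dd := by exact_mod_cast hcc
        omega
      have hq : qbinom ((RatFunc.X : RatFunc ℚ)^2) (a+b) ((a:ℤ) + (t0:ℤ) - (t1:ℤ)) = 0 := by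
        unfold qbinom
        rw [if_neg (by push_cast [hdd]; omega)]
      rw [hW, hq, Finset.sum_empty, mul_zero]

/-! the zigzag middle part -/

def offF (N : ℕ → ℕ) (r : ℕ) : ℕ := ∑ j ∈ Finset.range r, (N j + N (j+1))

def lamMid (N : ℕ → ℕ) (r : ℕ) : List Bool :=
  ((List.range r).map fun i => List.replicate (N i) false ++ List.replicate (N (i+1)) true).flatten

def dsegF (N t : ℕ → ℕ) (j : ℕ) : ℤ := (N j : ℤ) + (t j : ℤ) - (t (j+1) : ℤ)

open Classical in
noncomputable def SmidF (N t : ℕ → ℕ) (r : ℕ) : Finset (List Bool) :=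
  (listsF (offF N r)).filter fun w => ∀ i ∈ Finset.range (r+1),
    ((w.take (offF N i)).count false : ℤ) = ∑ j ∈ Finset.range i, dsegF N t j

def fmidF (N t : ℕ → ℕ) (r : ℕ) (w : List Bool) (s : ℕ) : ℤ :=
  (((lamMid N r).take s).count false : ℤ) + (t 0 : ℤ) - ((w.take s).count false : ℤ)

def CfunF (N t : ℕ → ℕ) (r : ℕ) (w : List Bool) : ℤ :=
  ∑ s ∈ Finset.range (offF N r), (fmidF N t r w s + fmidF N t r w (s+1))

def EfunF (N t : ℕ → ℕ) (i : ℕ) : ℤ :=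
  2*((N i : ℤ)*(t i : ℤ) + (N (i+1) : ℤ)*(t (i+1) : ℤ)) + ((t i : ℤ) - (t (i+1) : ℤ))^2

lemma mem_SmidF {N t : ℕ → ℕ} {r : ℕ} {w : List Bool} :
    w ∈ SmidF N t r ↔ w.length = offF N r ∧ ∀ i ≤ r,
      ((w.take (offF N i)).count false : ℤ) = ∑ j ∈ Finset.range i, dsegF N t j := by
  simp [SmidF, Finset.mem_filter, mem_listsF, Nat.lt_succ_iff]

lemma offF_succ_left (N : ℕ → ℕ) (r : ℕ) :
    offF N (r+1) = (N 0 + N 1) + offF (N ∘ Nat.succ) r := by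
  unfold offF
  rw [Finset.sum_range_succ' (fun j => N j + N (j+1)) r]
  exact add_comm _ _

lemma offF_one (N : ℕ → ℕ) : offF N 1 = N 0 + N 1 := by simp [offF]

lemma offF_mono {N : ℕ → ℕ} {i r : ℕ} (h : i ≤ r) : offF N i ≤ offF N r :=
  Finset.sum_le_sum_of_subset (Finset.range_subset_range.mpr h)

lemma lamMid_succ (N : ℕ → ℕ) (r : ℕ) :
    lamMid N (r+1)
      = (List.replicate (N 0) false ++ List.replicate (N 1) true) ++ lamMid (N ∘ Nat.succ) r := by
  unfold lamMid
  rw [List.range_succ_eq_map]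
  rw [List.map_cons, List.map_map, List.flatten_cons]
  rfl

lemma lamMid_length : ∀ (r : ℕ) (N : ℕ → ℕ), (lamMid N r).length = offF N r
  | 0, N => by simp [lamMid, offF]
  | r+1, N => by
      rw [lamMid_succ, List.length_append, lamMid_length r, offF_succ_left]
      simp

lemma count_block_take (a b s : ℕ) :
    (((List.replicate a false ++ List.replicate b true)).take s).count false = min s a := by
  rw [List.take_append, List.count_append, List.take_replicate, List.take_replicate,
    List.count_replicate, List.count_replicate]
  simp

lemma count_block (a b : ℕ) :
    ((List.replicate a false ++ List.replicate b true)).count false = a := by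
  simp [List.count_append, List.count_replicate]

lemma block_length (a b : ℕ) : (List.replicate a false ++ List.replicate b true).length = a + b := by
  simp

lemma dseg_shift (N t : ℕ → ℕ) (i : ℕ) :
    ∑ j ∈ Finset.range (i+1), dsegF N t j
      = dsegF N t 0 + ∑ j ∈ Finset.range i, dsegF (N ∘ Nat.succ) (t ∘ Nat.succ) j := by
  rw [Finset.sum_range_succ' (dsegF N t) i]
  exact add_comm _ _

lemma SmidF_take {N t : ℕ → ℕ} {r : ℕ} {w : List Bool} (h : w ∈ SmidF N t (r+1)) :
    w.take (N 0 + N 1) ∈ WSegF (N 0) (N 1) (t 0) (t 1) := by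
  obtain ⟨hlen, hcond⟩ := mem_SmidF.mp h
  have h1 := hcond 1 (by omega)
  rw [offF_one] at h1
  simp only [WSegF, Finset.mem_filter, mem_listsF]
  constructor
  · rw [List.length_take, hlen, offF_succ_left]
    omega
  · rw [h1]
    simp [dsegF]

lemma SmidF_drop {N t : ℕ → ℕ} {r : ℕ} {w : List Bool} (h : w ∈ SmidF N t (r+1)) :
    w.drop (N 0 + N 1) ∈ SmidF (N ∘ Nat.succ) (t ∘ Nat.succ) r := by
  obtain ⟨hlen, hcond⟩ := mem_SmidF.mp h
  have h1 := hcond 1 (by omega)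
  rw [offF_one] at h1
  rw [mem_SmidF]
  constructor
  · rw [List.length_drop, hlen, offF_succ_left]
    omega
  · intro i hi
    have h2 := hcond (i+1) (by omega)
    rw [offF_succ_left N i, List.take_add, List.count_append, dseg_shift] at h2
    rw [Finset.sum_range_one] at h1
    simp only [dsegF] at h1 h2 ⊢
    push_cast at h1 h2 ⊢
    omega

lemma SmidF_append {N t : ℕ → ℕ} {r : ℕ} {u v : List Bool}
    (hu : u ∈ WSegF (N 0) (N 1) (t 0) (t 1)) (hv : v ∈ SmidF (N ∘ Nat.succ) (t ∘ Nat.succ) r) :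
    u ++ v ∈ SmidF N t (r+1) := by
  simp only [WSegF, Finset.mem_filter, mem_listsF] at hu
  obtain ⟨hul, huc⟩ := hu
  obtain ⟨hvl, hvc⟩ := mem_SmidF.mp hv
  rw [mem_SmidF]
  constructor
  · rw [List.length_append, hul, hvl, offF_succ_left]
  · intro i hi
    cases i with
    | zero => simp [offF]
    | succ i =>
      have hvi := hvc i (by omega)
      rw [offF_succ_left N i, List.take_add, List.count_append, List.take_left' hul,
        List.drop_left' hul, dseg_shift]
      simp only [dsegF] at hvi ⊢
      push_cast at huc hvi ⊢
      omega

lemma fmid_low (N t : ℕ → ℕ) (r : ℕ) (w : List Bool) {s : ℕ} (hs : s ≤ N 0 + N 1) :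
    fmidF N t (r+1) w s = fsegF (N 0) (t 0) (w.take (N 0 + N 1)) s := by
  unfold fmidF fsegF
  rw [lamMid_succ,
    List.take_append_of_le_length (by rw [block_length]; exact hs),
    count_block_take, List.take_take, min_eq_left hs]
  push_cast
  ring

lemma fmid_high (N t : ℕ → ℕ) (r : ℕ) (w : List Bool) (h : w ∈ SmidF N t (r+1)) (s : ℕ) :
    fmidF N t (r+1) w (N 0 + N 1 + s)
      = fmidF (N ∘ Nat.succ) (t ∘ Nat.succ) r (w.drop (N 0 + N 1)) s := by
  obtain ⟨hlen, hcond⟩ := mem_SmidF.mp h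
  have h1 := hcond 1 (by omega)
  rw [offF_one] at h1
  unfold fmidF
  rw [lamMid_succ, List.take_add, List.count_append,
    List.take_left' (block_length (N 0) (N 1)), List.drop_left' (block_length (N 0) (N 1)),
    count_block, List.take_add (l := w), List.count_append]
  rw [Finset.sum_range_one] at h1
  simp only [dsegF] at h1
  simp only [Function.comp_apply]
  push_cast at h1 ⊢
  omega

lemma Cfun_split (N t : ℕ → ℕ) (r : ℕ) (w : List Bool) (h : w ∈ SmidF N t (r+1)) :
    CfunF N t (r+1) w
      = CsegF (N 0) (N 1) (t 0) (w.take (N 0 + N 1))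
        + CfunF (N ∘ Nat.succ) (t ∘ Nat.succ) r (w.drop (N 0 + N 1)) := by
  unfold CfunF CsegF
  rw [offF_succ_left, Finset.sum_range_add]
  congr 1
  · apply Finset.sum_congr rfl
    intro s hs
    rw [Finset.mem_range] at hs
    rw [fmid_low N t r w hs.le, fmid_low N t r w (by omega)]
  · apply Finset.sum_congr rfl
    intro s _
    rw [show N 0 + N 1 + s + 1 = N 0 + N 1 + (s+1) from by omega]
    rw [fmid_high N t r w h, fmid_high N t r w h]

lemma GEN : ∀ (r : ℕ) (N t : ℕ → ℕ),
    ∑ u ∈ SmidF N t r, (RatFunc.X : RatFunc ℚ) ^ CfunF N t r u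
      = ∏ i ∈ Finset.range r,
          (RatFunc.X : RatFunc ℚ) ^ EfunF N t i
            * qbinom ((RatFunc.X : RatFunc ℚ)^2) (N i + N (i+1)) (dsegF N t i)
  | 0, N, t => by
      have hS : SmidF N t 0 = {[]} := by
        ext w
        rw [mem_SmidF, Finset.mem_singleton]
        simp [offF, List.length_eq_zero_iff]
      rw [hS]
      simp [CfunF, offF]
  | r+1, N, t => by
      have key := GEN r (N ∘ Nat.succ) (t ∘ Nat.succ)
      rw [Finset.prod_range_succ']
      have hrw : ∀ i ∈ Finset.range r,
          (RatFunc.X : RatFunc ℚ) ^ EfunF N t (i+1)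
              * qbinom ((RatFunc.X : RatFunc ℚ)^2) (N (i+1) + N (i+1+1)) (dsegF N t (i+1))
            = (RatFunc.X : RatFunc ℚ) ^ EfunF (N ∘ Nat.succ) (t ∘ Nat.succ) i
              * qbinom ((RatFunc.X : RatFunc ℚ)^2)
                  ((N ∘ Nat.succ) i + (N ∘ Nat.succ) (i+1)) (dsegF (N ∘ Nat.succ) (t ∘ Nat.succ) i) :=
        fun i _ => rfl
      have hseg : (∑ u ∈ WSegF (N 0) (N 1) (t 0) (t 1),
            (RatFunc.X : RatFunc ℚ) ^ CsegF (N 0) (N 1) (t 0) u)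
          = (RatFunc.X : RatFunc ℚ) ^ EfunF N t 0
              * qbinom ((RatFunc.X : RatFunc ℚ)^2) (N 0 + N (0+1)) (dsegF N t 0) := by
        rw [segsum (N 0) (N 1) (t 0) (t 1)]
        rfl
      rw [Finset.prod_congr rfl hrw, ← key, ← hseg, mul_comm,
        Finset.sum_mul_sum, ← Finset.sum_product']
      apply Finset.sum_nbij' (fun w => (w.take (N 0 + N 1), w.drop (N 0 + N 1)))
        (fun p => p.1 ++ p.2)
      · intro w hw
        rw [Finset.mem_product]
        exact ⟨SmidF_take hw, SmidF_drop hw⟩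
      · intro p hp
        rw [Finset.mem_product] at hp
        exact SmidF_append hp.1 hp.2
      · intro w _
        exact List.take_append_drop _ w
      · intro p hp
        rw [Finset.mem_product] at hp
        obtain ⟨hp1, hp2⟩ := hp
        simp only [WSegF, Finset.mem_filter, mem_listsF] at hp1
        have h1 : (p.1 ++ p.2).take (N 0 + N 1) = p.1 := List.take_left' hp1.1
        have h2 : (p.1 ++ p.2).drop (N 0 + N 1) = p.2 := List.drop_left' hp1.1
        rw [h1, h2]
      · intro w hw
        rw [Cfun_split N t r w hw, zpow_add₀ RatFunc.X_ne_zero]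

/-! counting lemmas for the full path -/

lemma lamMid_count : ∀ (r : ℕ) (N : ℕ → ℕ), (lamMid N r).count false = ∑ j ∈ Finset.range r, N j
  | 0, N => by simp [lamMid]
  | r+1, N => by
      rw [lamMid_succ, List.count_append, count_block, lamMid_count r,
        Finset.sum_range_succ' N r]
      exact (add_comm _ _).symm

lemma above : ∀ (r : ℕ) (N t : ℕ → ℕ) (w : List Bool), w ∈ SmidF N t r → ∀ s, s ≤ offF N r →
    ((w.take s).count false : ℤ) ≤ (((lamMid N r).take s).count false : ℤ) + (t 0 : ℤ)
  | 0, N, t, w, hw, s, hs => by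
      have h0 : offF N 0 = 0 := by simp [offF]
      have hs0 : s = 0 := by omega
      subst hs0
      simp
  | r+1, N, t, w, hw, s, hs => by
      obtain ⟨hlen, hcond⟩ := mem_SmidF.mp hw
      have h1 := hcond 1 (by omega)
      rw [offF_one, Finset.sum_range_one] at h1
      simp only [dsegF] at h1
      rcases le_or_gt s (N 0 + N 1) with hsm | hsm
      · rw [lamMid_succ, List.take_append_of_le_length (by rw [block_length]; exact hsm),
          count_block_take]
        have hc1 : (w.take s).count false ≤ s := by
          have h' := (w.take s).count_le_length (a := false)
          have hl2 : (w.take s).length ≤ s := by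
            rw [List.length_take]
            omega
          omega
        have hc2 : (w.take s).count false ≤ (w.take (N 0 + N 1)).count false := by
          have he : w.take s = (w.take (N 0 + N 1)).take s := by
            rw [List.take_take, min_eq_left hsm]
          rw [he]
          exact (List.take_sublist _ _).count_le _
        push_cast at h1 ⊢
        omega
      · obtain ⟨s', rfl⟩ : ∃ s', s = (N 0 + N 1) + s' := ⟨s - (N 0 + N 1), by omega⟩
        have hs' : s' ≤ offF (N ∘ Nat.succ) r := by
          rw [offF_succ_left] at hs
          omega
        have ih := above r (N ∘ Nat.succ) (t ∘ Nat.succ) (w.drop (N 0 + N 1)) (SmidF_drop hw) s' hs'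
        rw [lamMid_succ,
          List.take_add (l := (List.replicate (N 0) false ++ List.replicate (N 1) true)
            ++ lamMid (N ∘ Nat.succ) r) (i := N 0 + N 1) (j := s'),
          List.count_append,
          List.take_left' (block_length (N 0) (N 1)), List.drop_left' (block_length (N 0) (N 1)),
          count_block, List.take_add (l := w) (i := N 0 + N 1) (j := s'), List.count_append]
        simp only [Function.comp_apply] at ih
        push_cast at h1 ih ⊢
        omega

lemma lamMid_succ_right (N : ℕ → ℕ) (r : ℕ) :
    lamMid N (r+1)
      = lamMid N r ++ (List.replicate (N r) false ++ List.replicate (N (r+1)) true) := by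
  unfold lamMid
  rw [List.range_succ, List.map_append, List.flatten_append]
  simp

lemma deltaComp_eq : ∀ (r : ℕ) (N : ℕ → ℕ),
    deltaComp N (r+1)
      = List.replicate (N 0) true ++ (lamMid N r ++ List.replicate (N r) false)
  | 0, N => by
      show ((List.range 1).map fun i => delta (N i)).flatten = _
      rw [List.range_succ]
      simp [lamMid, delta]
  | r+1, N => by
      have ih := deltaComp_eq r N
      have h1 : deltaComp N (r+2) = deltaComp N (r+1) ++ delta (N (r+1)) := by
        unfold deltaComp
        rw [List.range_succ, List.map_append, List.flatten_append]
        simp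
      rw [h1, ih, lamMid_succ_right]
      simp [delta, List.append_assoc]

lemma dseg_sum (N t : ℕ → ℕ) (i : ℕ) :
    ∑ j ∈ Finset.range i, dsegF N t j
      = ((∑ j ∈ Finset.range i, N j : ℕ) : ℤ) + (t 0 : ℤ) - (t i : ℤ) := by
  have h1 : ∀ j ∈ Finset.range i, dsegF N t j = (N j : ℤ) + ((t j : ℤ) - (t (j+1) : ℤ)) := by
    intro j _
    unfold dsegF
    ring
  rw [Finset.sum_congr rfl h1, Finset.sum_add_distrib,
    Finset.sum_range_sub' (fun j => (t j : ℤ)) i]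
  push_cast
  ring

lemma Noff (N : ℕ → ℕ) (i : ℕ) :
    N 0 + offF N i = 2 * (∑ j ∈ Finset.range i, N j) + N i := by
  unfold offF
  rw [Finset.sum_add_distrib]
  have h1 := Finset.sum_range_succ' N i
  have h2 := Finset.sum_range_succ N i
  omega

lemma pathX_nat (w : List Bool) (x0 : ℤ) (s : ℕ) :
    pathX w x0 (s : ℤ) = x0 + ((w.take s).count false : ℤ) := by
  simp [pathX]

/-! counting in the embedded path -/

section emb

variable (r : ℕ) (N t : ℕ → ℕ) (w' : List Bool)

def embF : List Bool := List.replicate (N 0) true ++ (w' ++ List.replicate (N r) false)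

lemma emb_take_low {s : ℕ} (hs : s ≤ N 0) :
    ((embF r N w').take s).count false = 0 := by
  unfold embF
  rw [List.take_append_of_le_length (by simpa using hs), List.take_replicate,
    List.count_replicate]
  simp

lemma lam_take_low {s : ℕ} (hs : s ≤ N 0) :
    (((deltaComp N (r+1)).take s)).count false = 0 := by
  rw [deltaComp_eq, List.take_append_of_le_length (by simpa using hs), List.take_replicate,
    List.count_replicate]
  simp

lemma emb_take_mid (hl : w'.length = offF N r) {s : ℕ} (hs : s ≤ offF N r) :
    ((embF r N w').take (N 0 + s)).count false = (w'.take s).count false := by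
  unfold embF
  rw [List.take_add, List.take_left' List.length_replicate,
    List.drop_left' List.length_replicate, List.count_append,
    List.take_append_of_le_length (by omega), List.count_replicate]
  simp

lemma lam_take_mid {s : ℕ} (hs : s ≤ offF N r) :
    ((deltaComp N (r+1)).take (N 0 + s)).count false = ((lamMid N r).take s).count false := by
  rw [deltaComp_eq, List.take_add, List.take_left' List.length_replicate,
    List.drop_left' List.length_replicate, List.count_append,
    List.take_append_of_le_length (by rw [lamMid_length]; exact hs), List.count_replicate]
  simp

lemma emb_take_high (hl : w'.length = offF N r) (s : ℕ) :
    ((embF r N w').take (N 0 + (offF N r + s))).count false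
      = w'.count false + min s (N r) := by
  unfold embF
  rw [List.take_add, List.take_left' List.length_replicate,
    List.drop_left' List.length_replicate, List.count_append,
    List.take_add, List.take_left' hl, List.drop_left' hl, List.count_append,
    List.take_replicate, List.count_replicate, List.count_replicate]
  simp

lemma lam_take_high (s : ℕ) :
    ((deltaComp N (r+1)).take (N 0 + (offF N r + s))).count false
      = (∑ j ∈ Finset.range r, N j) + min s (N r) := by
  rw [deltaComp_eq, List.take_add, List.take_left' List.length_replicate,
    List.drop_left' List.length_replicate, List.count_append,
    List.take_add, List.take_left' (lamMid_length r N), List.drop_left' (lamMid_length r N),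
    List.count_append, List.take_replicate, List.count_replicate, List.count_replicate,
    lamMid_count]
  simp

end emb

lemma SmidF_count {r : ℕ} {N t : ℕ → ℕ} {w' : List Bool} (htr : t r = 0) (ht0 : t 0 = 0)
    (hw' : w' ∈ SmidF N t r) : w'.count false = ∑ j ∈ Finset.range r, N j := by
  obtain ⟨hlen, hcond⟩ := mem_SmidF.mp hw'
  have h := hcond r le_rfl
  rw [List.take_of_length_le (le_of_eq hlen), dseg_sum, ht0, htr] at h
  omega

def GdF (lam mu : List Bool) (d : ℕ) : ℤ :=
  ((lam.take d).count false : ℤ) - ((mu.take d).count false : ℤ)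

lemma area_bridge (r : ℕ) (N t : ℕ → ℕ) (ht0 : t 0 = 0) (htr : t r = 0)
    (w' : List Bool) (hw' : w' ∈ SmidF N t r) :
    area2 (∑ j ∈ Finset.range (r+1), N j) (deltaComp N (r+1)) (embF r N w') 0
      = CfunF N t r w' := by
  obtain ⟨hlen, hcond⟩ := mem_SmidF.mp hw'
  have hcnt : w'.count false = ∑ j ∈ Finset.range r, N j := SmidF_count htr ht0 hw'
  have h2n : 2 * (∑ j ∈ Finset.range (r+1), N j) = N 0 + offF N r + N r := by
    have h1 := Noff N r
    have h2 := Finset.sum_range_succ N r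
    omega
  have e0 : area2 (∑ j ∈ Finset.range (r+1), N j) (deltaComp N (r+1)) (embF r N w') 0
      = ∑ d ∈ Finset.range (2 * (∑ j ∈ Finset.range (r+1), N j)),
          (GdF (deltaComp N (r+1)) (embF r N w') d + GdF (deltaComp N (r+1)) (embF r N w') (d+1)) := by
    unfold area2
    apply Finset.sum_congr rfl
    intro d _
    have e1 : ((d:ℤ)+1) = ((d+1 : ℕ) : ℤ) := by push_cast; ring
    rw [e1, neg_zero, pathX_nat, pathX_nat, pathX_nat, pathX_nat]
    unfold GdF
    ring
  rw [e0, show 2 * (∑ j ∈ Finset.range (r+1), N j) = (N 0 + offF N r) + N r from by omega,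
    Finset.sum_range_add, Finset.sum_range_add]
  have P1 : (∑ d ∈ Finset.range (N 0),
      (GdF (deltaComp N (r+1)) (embF r N w') d + GdF (deltaComp N (r+1)) (embF r N w') (d+1))) = 0 := by
    apply Finset.sum_eq_zero
    intro d hd
    rw [Finset.mem_range] at hd
    unfold GdF
    rw [lam_take_low r N (by omega : d ≤ N 0), emb_take_low r N w' (by omega : d ≤ N 0),
      lam_take_low r N (by omega : d+1 ≤ N 0), emb_take_low r N w' (by omega : d+1 ≤ N 0)]
    ring
  have P3 : (∑ s ∈ Finset.range (N r),
      (GdF (deltaComp N (r+1)) (embF r N w') ((N 0 + offF N r) + s)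
        + GdF (deltaComp N (r+1)) (embF r N w') ((N 0 + offF N r) + s + 1))) = 0 := by
    apply Finset.sum_eq_zero
    intro s _
    unfold GdF
    rw [show (N 0 + offF N r) + s = N 0 + (offF N r + s) from by omega,
      show N 0 + (offF N r + s) + 1 = N 0 + (offF N r + (s+1)) from by omega,
      lam_take_high r N s, emb_take_high r N w' hlen s,
      lam_take_high r N (s+1), emb_take_high r N w' hlen (s+1), hcnt]
    ring
  have P2 : (∑ s ∈ Finset.range (offF N r),
      (GdF (deltaComp N (r+1)) (embF r N w') (N 0 + s)
        + GdF (deltaComp N (r+1)) (embF r N w') (N 0 + s + 1))) = CfunF N t r w' := by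
    unfold CfunF
    apply Finset.sum_congr rfl
    intro s hs
    rw [Finset.mem_range] at hs
    have eg : ∀ s', s' ≤ offF N r →
        GdF (deltaComp N (r+1)) (embF r N w') (N 0 + s') = fmidF N t r w' s' := by
      intro s' hs'
      unfold GdF fmidF
      rw [lam_take_mid r N hs', emb_take_mid r N w' hlen hs', ht0]
      push_cast
      ring
    rw [show N 0 + s + 1 = N 0 + (s+1) from by omega, eg s hs.le, eg (s+1) (by omega)]
  rw [P1, P2, P3]
  ring

lemma set_eq (r : ℕ) (N t : ℕ → ℕ) (ht0 : t 0 = 0) (htr : t r = 0) :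
    {w : List Bool | w ∈ LSet (∑ j ∈ Finset.range (r+1), N j) (deltaComp N (r+1)) 0 0 ∧
        ∀ i < r+1, pathX w 0 (2 * ((∑ j ∈ Finset.range i, N j : ℕ) : ℤ) + (N i : ℤ))
          = ((∑ j ∈ Finset.range i, N j : ℕ) : ℤ) - (t i : ℤ)}
      = ↑((SmidF N t r).image (embF r N)) := by
  have h2n : 2 * (∑ j ∈ Finset.range (r+1), N j) = N 0 + offF N r + N r := by
    have h1 := Noff N r
    have h2 := Finset.sum_range_succ N r
    omega
  ext w
  simp only [Set.mem_setOf_eq, Finset.coe_image, Set.mem_image, Finset.mem_coe]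
  constructor
  · rintro ⟨hL, hpk⟩
    obtain ⟨hlen, hcntZ, habove⟩ := hL
    have hcnt : w.count false = ∑ j ∈ Finset.range (r+1), N j := by
      have : (w.count false : ℤ) = ((∑ j ∈ Finset.range (r+1), N j : ℕ) : ℤ) := by
        rw [hcntZ]; ring
      exact_mod_cast this
    have hpk' : ∀ i, i ≤ r → ((w.take (N 0 + offF N i)).count false : ℤ)
        = ((∑ j ∈ Finset.range i, N j : ℕ) : ℤ) - (t i : ℤ) := by
      intro i hi
      have h := hpk i (by omega)
      have e : (2 * ((∑ j ∈ Finset.range i, N j : ℕ) : ℤ) + (N i : ℤ))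
          = ((N 0 + offF N i : ℕ) : ℤ) := by
        have := Noff N i
        omega
      rw [e, pathX_nat] at h
      omega
    have h0 : (w.take (N 0)).count false = 0 := by
      have h := hpk' 0 (Nat.zero_le r)
      simp only [offF, Finset.range_zero, Finset.sum_empty, Nat.add_zero, Nat.cast_zero, ht0] at h
      omega
    refine ⟨(w.drop (N 0)).take (offF N r), ?_, ?_⟩
    · rw [mem_SmidF]
      constructor
      · rw [List.length_take, List.length_drop, hlen]
        omega
      · intro i hi
        have key := hpk' i hi
        rw [List.take_take, min_eq_left (offF_mono hi)]
        rw [List.take_add (l := w) (i := N 0) (j := offF N i), List.count_append] at key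
        rw [dseg_sum, ht0]
        push_cast at key ⊢
        omega
    · unfold embF
      have e4 : w.take (N 0) = List.replicate (N 0) true := by
        rw [List.eq_replicate_iff]
        constructor
        · rw [List.length_take, hlen]
          omega
        · intro b hb
          cases b with
          | true => rfl
          | false =>
            exfalso
            have : false ∉ w.take (N 0) := List.count_eq_zero.mp h0
            exact this hb
      have hc2 : (w.drop (N 0 + offF N r)).count false = N r := by
        have e7 : w.count false
            = (w.take (N 0 + offF N r)).count false + (w.drop (N 0 + offF N r)).count false := by
          conv_lhs => rw [← List.take_append_drop (N 0 + offF N r) w]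
          rw [List.count_append]
        have e8 := hpk' r le_rfl
        rw [htr] at e8
        have h9 := Finset.sum_range_succ N r
        omega
      have hlen2 : (w.drop (N 0 + offF N r)).length = N r := by
        rw [List.length_drop, hlen]
        omega
      have e5 : w.drop (N 0 + offF N r) = List.replicate (N r) false := by
        rw [List.eq_replicate_iff]
        refine ⟨hlen2, ?_⟩
        intro b hb
        exact (List.count_eq_length.mp (by rw [hc2, hlen2]) b hb).symm
      conv_rhs => rw [← List.take_append_drop (N 0) w]
      rw [e4]
      congr 1
      conv_rhs => rw [← List.take_append_drop (offF N r) (w.drop (N 0))]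
      congr 1
      rw [List.drop_drop]
      exact e5.symm
  · rintro ⟨w', hw', rfl⟩
    obtain ⟨hlen, hcond⟩ := mem_SmidF.mp hw'
    have hcnt := SmidF_count htr ht0 hw'
    refine ⟨⟨?_, ?_, ?_⟩, ?_⟩
    · unfold embF
      rw [List.length_append, List.length_append, List.length_replicate,
        List.length_replicate, hlen]
      omega
    · unfold embF
      have c1 : (List.replicate (N 0) true).count false = 0 := by simp [List.count_replicate]
      have c2 : (List.replicate (N r) false).count false = N r := by simp [List.count_replicate]
      rw [List.count_append, List.count_append, c1, c2, hcnt]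
      have h9 := Finset.sum_range_succ N r
      omega
    · intro c hc0 hc2n
      obtain ⟨s, rfl⟩ : ∃ s : ℕ, c = (s:ℤ) := ⟨c.toNat, (Int.toNat_of_nonneg hc0).symm⟩
      rw [neg_zero, pathX_nat, pathX_nat]
      have hs2n : s ≤ 2 * (∑ j ∈ Finset.range (r+1), N j) := by exact_mod_cast hc2n
      rcases le_or_gt s (N 0) with h1 | h1
      · rw [emb_take_low r N w' h1, lam_take_low r N h1]
      · rcases le_or_gt s (N 0 + offF N r) with h2 | h2
        · obtain ⟨s1, rfl⟩ : ∃ s1, s = N 0 + s1 := ⟨s - N 0, by omega⟩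
          have hs1 : s1 ≤ offF N r := by omega
          rw [emb_take_mid r N w' hlen hs1, lam_take_mid r N hs1]
          have hab := above r N t w' hw' s1 hs1
          rw [ht0] at hab
          push_cast at hab ⊢
          omega
        · obtain ⟨s2, rfl⟩ : ∃ s2, s = N 0 + (offF N r + s2) := ⟨s - (N 0 + offF N r), by omega⟩
          rw [emb_take_high r N w' hlen s2, lam_take_high r N s2, hcnt]
    · intro i hi
      have hi' : i ≤ r := by omega
      have e : (2 * ((∑ j ∈ Finset.range i, N j : ℕ) : ℤ) + (N i : ℤ))
          = ((N 0 + offF N i : ℕ) : ℤ) := by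
        have := Noff N i
        omega
      rw [e, pathX_nat, emb_take_mid r N w' hlen (offF_mono hi'), hcond i hi', dseg_sum, ht0]
      omega


/-- **Area lemma.** Let `λ = Δ_{n1,…,nk}` and let `t1, …, tk` be nonnegative
integers with `t1 = tk = 0`.  Let `L'(λ; t1, …, tk)` be the set of paths
`μ ∈ L(λ; 0, 0)` meeting the line of slope `-1` through the `i`-th peak `P_i`
at `P_i + (-t_i, t_i)` for every `i`.  Then
`Σ_{μ ∈ L'} q^{|λ/μ|}
  = Π_{i=1}^{k-1} q^{n_i t_i + n_{i+1} t_{i+1} + (t_i - t_{i+1})²/2}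
      · [n_i + n_{i+1} choose n_i + t_i - t_{i+1}]_q`,
stated in the field of rational functions in `v = q^{1/2} = RatFunc.X`
(so `q = v²` and `q^{|λ/μ|} = v^{2|λ/μ|}`). -/
theorem area_sum_over_Lprime (k : ℕ) (hk : 1 ≤ k) (N : ℕ → ℕ) (t : ℕ → ℕ)
    (ht1 : t 0 = 0) (htk : t (k - 1) = 0) :
    ∑ᶠ mu ∈ {w : List Bool | w ∈ LSet (∑ j ∈ Finset.range k, N j) (deltaComp N k) 0 0 ∧
        ∀ i < k, pathX w 0 (2 * ((∑ j ∈ Finset.range i, N j : ℕ) : ℤ) + (N i : ℤ))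
          = ((∑ j ∈ Finset.range i, N j : ℕ) : ℤ) - (t i : ℤ)},
        (RatFunc.X : RatFunc ℚ) ^ area2 (∑ j ∈ Finset.range k, N j) (deltaComp N k) mu 0
      = ∏ i ∈ Finset.range (k - 1),
          (RatFunc.X : RatFunc ℚ) ^
              (2 * ((N i : ℤ) * (t i : ℤ) + (N (i + 1) : ℤ) * (t (i + 1) : ℤ)) +
                ((t i : ℤ) - (t (i + 1) : ℤ)) ^ 2) *
            qbinom ((RatFunc.X : RatFunc ℚ) ^ 2) (N i + N (i + 1))
              ((N i : ℤ) + (t i : ℤ) - (t (i + 1) : ℤ)) := by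
  obtain ⟨r, rfl⟩ : ∃ r, k = r + 1 := ⟨k - 1, by omega⟩
  have htr : t r = 0 := by simpa using htk
  rw [set_eq r N t ht1 htr, finsum_mem_coe_finset]
  rw [Finset.sum_image (fun x hx y hy hxy => ?inj)]
  case inj =>
    unfold embF at hxy
    have h1 := List.append_cancel_left hxy
    exact List.append_cancel_right h1
  rw [Finset.sum_congr rfl
    (fun w' hw' => by rw [area_bridge r N t ht1 htr w' hw'])]
  rw [GEN r N t]
  rw [show r + 1 - 1 = r from rfl]
  exact Finset.prod_congr rfl (fun i _ => rfl)

end DyckTilings
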